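/- Let n, d, c be positive integers with c ≥ 3, let X̃ ∈ ℝ^{n×d} be a fixed matrix, and let 𝒳_*, 𝒵_*, ℰ_{l,21}, ℰ_{f,1} ≥ 0 be constants. Let Θ be the set of triples (X, Z, E_l) with X ∈ ℝ^{n×d}, Z ∈ ℝ^{d×c}, E_l ∈ ℝ^{n×c} satisfying ‖X‖_* ≤ 𝒳_*, ‖Z‖_* ≤ 𝒵_*, ‖E_l‖_{2,1} ≤ ℰ_{l,21}, ‖X̃ − X‖₁ ≤ ℰ_{f,1}, and such that every row of XZ is a standard basis (one-hot) vector of ℝ^c with all entries in {0,1}. Then the empirical Rademacher complexity of the associated function class, namely (1/2^{nc}) Σ_{σ : [n]×[c] → {−1,+1}} sup_{(X,Z,E_l) ∈ Θ} (1/(nc)) Σ_{i=1}^n Σ_{j=1}^c σ(i,j)·((XZ)_{ij} + (E_l)_{ij}), is at most ℰ_{l,21}·√(3 ln c /(nc)) + min{ 𝒳_*·𝒵_*·√(ln(2·max(n,c))/(nc)), 𝒵_*·(‖X̃‖_F + √d·ℰ_{f,1})/√(nc), √(2/c) }. -/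

import Mathlib

open Matrix Finset

/-- Entrywise ℓ1-norm of a real matrix. -/
noncomputable def l1Norm {m k : ℕ} (A : Matrix (Fin m) (Fin k) ℝ) : ℝ :=
  ∑ i, ∑ j, |A i j|

/-- Frobenius norm of a real matrix. -/
noncomputable def frobNorm {m k : ℕ} (A : Matrix (Fin m) (Fin k) ℝ) : ℝ :=
  Real.sqrt (∑ i, ∑ j, (A i j) ^ 2)

/-- ℓ2,1-norm of a real matrix: the sum of the Euclidean norms of the rows. -/
noncomputable def l21Norm {m k : ℕ} (A : Matrix (Fin m) (Fin k) ℝ) : ℝ :=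
  ∑ i, Real.sqrt (∑ j, (A i j) ^ 2)

/-- Nuclear norm of a real matrix: tr((AᵀA)^{1/2}), i.e. the sum of the singular values. -/
noncomputable def nuclearNorm {m k : ℕ} (A : Matrix (Fin m) (Fin k) ℝ) : ℝ :=
  (((Matrix.posSemidef_conjTranspose_mul_self A).1.eigenvectorUnitary : Matrix (Fin k) (Fin k) ℝ) *
    diagonal (((↑) ∘ (fun i => √((Matrix.posSemidef_conjTranspose_mul_self A).1.eigenvalues i))) : Fin k → ℝ) *
    (star (Matrix.posSemidef_conjTranspose_mul_self A).1.eigenvectorUnitary : Matrix (Fin k) (Fin k) ℝ)).trace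

/-- The real sign ±1 associated with a Boolean Rademacher variable. -/
noncomputable def sgn (b : Bool) : ℝ := if b then 1 else -1


lemma sum_sq_le_sq_sum_abs {ι : Type*} [Fintype ι] (f : ι → ℝ) :
    ∑ i, f i ^ 2 ≤ (∑ i, |f i|) ^ 2 := by
  have h : ∀ i ∈ Finset.univ (α := ι), f i ^ 2 ≤ |f i| * ∑ j, |f j| := by
    intro i _
    rw [← sq_abs]
    rw [sq]
    exact mul_le_mul_of_nonneg_left
      (Finset.single_le_sum (f := fun j => |f j|) (fun j _ => abs_nonneg _) (mem_univ i))
      (abs_nonneg _)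
  calc ∑ i, f i ^ 2 ≤ ∑ i, |f i| * ∑ j, |f j| := Finset.sum_le_sum h
    _ = (∑ i, |f i|) ^ 2 := by rw [← Finset.sum_mul, sq]

lemma frobNorm_le_l1Norm {m k : ℕ} (A : Matrix (Fin m) (Fin k) ℝ) :
    frobNorm A ≤ l1Norm A := by
  unfold frobNorm l1Norm
  have h := sum_sq_le_sq_sum_abs (fun p : Fin m × Fin k => A p.1 p.2)
  rw [Fintype.sum_prod_type] at h
  rw [Fintype.sum_prod_type] at h
  calc Real.sqrt (∑ i, ∑ j, A i j ^ 2) ≤ Real.sqrt ((∑ i, ∑ j, |A i j|) ^ 2) :=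
        Real.sqrt_le_sqrt h
    _ = _ := Real.sqrt_sq (by positivity)

lemma frobNorm_sub_le {m k : ℕ} (A B : Matrix (Fin m) (Fin k) ℝ) :
    frobNorm (A - B) ≤ frobNorm A + frobNorm B := by
  unfold frobNorm
  have key : ∑ i, ∑ j, (A i j - B i j) ^ 2 ≤
      (Real.sqrt (∑ i, ∑ j, A i j ^ 2) + Real.sqrt (∑ i, ∑ j, B i j ^ 2)) ^ 2 := by
    have cs := Real.sum_mul_le_sqrt_mul_sqrt Finset.univ
      (fun p : Fin m × Fin k => A p.1 p.2) (fun p => B p.1 p.2)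
    rw [Fintype.sum_prod_type, Fintype.sum_prod_type, Fintype.sum_prod_type] at cs
    have expand : ∑ i, ∑ j, (A i j - B i j) ^ 2 =
        (∑ i, ∑ j, A i j ^ 2) - 2 * (∑ i, ∑ j, A i j * B i j) + ∑ i, ∑ j, B i j ^ 2 := by
      have e : ∀ i j, (A i j - B i j) ^ 2 =
          A i j ^ 2 - 2 * (A i j * B i j) + B i j ^ 2 := by intros; ring
      simp_rw [e, Finset.sum_add_distrib, Finset.sum_sub_distrib, ← Finset.mul_sum]
    have hsa : (0:ℝ) ≤ ∑ i, ∑ j, A i j ^ 2 := by positivity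
    have hsb : (0:ℝ) ≤ ∑ i, ∑ j, B i j ^ 2 := by positivity
    have cs2 : -(∑ i, ∑ j, A i j * B i j) ≤
        Real.sqrt (∑ i, ∑ j, A i j ^ 2) * Real.sqrt (∑ i, ∑ j, B i j ^ 2) := by
      have cs' := Real.sum_mul_le_sqrt_mul_sqrt Finset.univ
        (fun p : Fin m × Fin k => -(A p.1 p.2)) (fun p => B p.1 p.2)
      simp only [neg_mul, neg_sq, Finset.sum_neg_distrib] at cs'
      rw [Fintype.sum_prod_type, Fintype.sum_prod_type, Fintype.sum_prod_type] at cs'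
      convert cs' using 3
    rw [expand]
    nlinarith [Real.sq_sqrt hsa, Real.sq_sqrt hsb, Real.sqrt_nonneg (∑ i, ∑ j, A i j ^ 2),
      Real.sqrt_nonneg (∑ i, ∑ j, B i j ^ 2), cs2]
  calc Real.sqrt (∑ i, ∑ j, (A i j - B i j) ^ 2) ≤ Real.sqrt ((Real.sqrt (∑ i, ∑ j, A i j ^ 2) + Real.sqrt (∑ i, ∑ j, B i j ^ 2)) ^ 2) := Real.sqrt_le_sqrt key
    _ = _ := Real.sqrt_sq (by positivity)

lemma frobNorm_mul_le {m d k : ℕ} (X : Matrix (Fin m) (Fin d) ℝ) (Z : Matrix (Fin d) (Fin k) ℝ) :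
    frobNorm (X * Z) ≤ frobNorm X * frobNorm Z := by
  unfold frobNorm
  rw [← Real.sqrt_mul (by positivity)]
  apply Real.sqrt_le_sqrt
  have h : ∀ i kk, (X * Z) i kk ^ 2 ≤ (∑ j, X i j ^ 2) * (∑ j, Z j kk ^ 2) := by
    intro i kk
    rw [Matrix.mul_apply]
    exact Finset.sum_mul_sq_le_sq_mul_sq _ _ _
  calc ∑ i, ∑ kk, (X * Z) i kk ^ 2 ≤ ∑ i, ∑ kk, (∑ j, X i j ^ 2) * (∑ j, Z j kk ^ 2) :=
        Finset.sum_le_sum fun i _ => Finset.sum_le_sum fun kk _ => h i kk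
    _ = (∑ i, ∑ j, X i j ^ 2) * (∑ j, ∑ kk, Z j kk ^ 2) := by
        rw [Finset.sum_mul]
        congr 1; ext i
        rw [← Finset.mul_sum, Finset.sum_comm]

lemma psd_entry_sq_le {k : ℕ} {S : Matrix (Fin k) (Fin k) ℝ} (hS : S.PosSemidef)
    (i j : Fin k) : S i j ^ 2 ≤ S i i * S j j := by
  rcases eq_or_ne i j with rfl | hij
  · rw [sq]
  have hsymm : S j i = S i j := by
    have := hS.1.apply j i
    simpa using this.symm
  have quad : ∀ t : ℝ, 0 ≤ S i i * (t * t) + (2 * S i j) * t + S j j := by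
    intro t
    have := hS.dotProduct_mulVec_nonneg (fun l => t * (if l = i then 1 else 0) + (if l = j then 1 else 0))
    have hmv : ∀ l, S.mulVec (fun l => t * (if l = i then 1 else 0) + (if l = j then 1 else 0)) l
        = t * S l i + S l j := by
      intro l
      simp only [mulVec, dotProduct, mul_add, mul_ite, mul_one, mul_zero,
        Finset.sum_add_distrib]
      rw [Finset.sum_ite_eq' univ i (fun m => S l m * t), Finset.sum_ite_eq' univ j (fun m => S l m)]
      simp [mul_comm]
    simp only [star_trivial, dotProduct, hmv] at this
    have hexp : ∑ l, (t * (if l = i then 1 else 0) + (if l = j then 1 else 0)) *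
        (t * S l i + S l j) =
        t * (t * S i i + S i j) + (t * S j i + S j j) := by
      simp only [add_mul, ite_mul, one_mul, zero_mul, mul_assoc, Finset.sum_add_distrib]
      rw [← Finset.mul_sum,
        Finset.sum_ite_eq' univ i (fun l => t * S l i + S l j),
        Finset.sum_ite_eq' univ j (fun l => t * S l i + S l j)]
      simp
    rw [hexp] at this
    rw [hsymm] at this
    nlinarith [this]
  have hd := discrim_le_zero quad
  rw [discrim] at hd
  nlinarith [hd]

lemma frobNorm_le_nuclearNorm {m k : ℕ} (A : Matrix (Fin m) (Fin k) ℝ) :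
    frobNorm A ≤ nuclearNorm A := by
  set P := Matrix.posSemidef_conjTranspose_mul_self A with hP
  set U : Matrix (Fin k) (Fin k) ℝ := (P.1.eigenvectorUnitary : Matrix (Fin k) (Fin k) ℝ) with hU
  set D := diagonal (((↑) ∘ (fun i => √(P.1.eigenvalues i))) : Fin k → ℝ) with hD
  set S := U * D * (star P.1.eigenvectorUnitary : Matrix (Fin k) (Fin k) ℝ) with hSdef
  have hUU : (star P.1.eigenvectorUnitary : Matrix (Fin k) (Fin k) ℝ) * U = 1 :=
    Unitary.coe_star_mul_self _
  have hstar : (star P.1.eigenvectorUnitary : Matrix (Fin k) (Fin k) ℝ) = Uᴴ := by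
    rw [hU, Matrix.star_eq_conjTranspose]
  have hS : S.PosSemidef := by
    rw [hSdef, hstar]
    exact (PosSemidef.diagonal (fun i => by simp [Real.sqrt_nonneg])).mul_mul_conjTranspose_same U
  have hmul : S * S = Aᴴ * A := by
    have hsp := P.1.spectral_theorem
    rw [Unitary.conjStarAlgAut_apply] at hsp
    have hDD : D * D = diagonal (RCLike.ofReal ∘ P.1.eigenvalues) := by
      rw [hD, diagonal_mul_diagonal]
      congr 1; ext i
      simp only [Function.comp_apply]
      exact Real.mul_self_sqrt (by convert Matrix.eigenvalues_conjTranspose_mul_self_nonneg A i)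
    calc S * S = U * (D * ((star P.1.eigenvectorUnitary : Matrix (Fin k) (Fin k) ℝ) * U) * D) *
          (star P.1.eigenvectorUnitary : Matrix (Fin k) (Fin k) ℝ) := by
          simp only [hSdef, Matrix.mul_assoc]
      _ = Aᴴ * A := by rw [hUU, Matrix.mul_one, hDD]; exact hsp.symm
  have hsymm : ∀ i j, S j i = S i j := fun i j => by simpa using (hS.1.apply j i).symm
  have htr : ∑ i, ∑ j, A i j ^ 2 = ∑ i, ∑ j, S i j ^ 2 := by
    have h1 : (Aᴴ * A).trace = ∑ j, ∑ i, A i j ^ 2 := by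
      simp [Matrix.trace, Matrix.mul_apply, Matrix.diag, conjTranspose_apply, sq]
    have h2 : (S * S).trace = ∑ i, ∑ j, S i j ^ 2 := by
      simp only [Matrix.trace, Matrix.diag, Matrix.mul_apply]
      congr 1; ext i; congr 1; ext j
      rw [hsymm j i, sq]
    rw [hmul] at h2
    rw [h2] at h1
    rw [Finset.sum_comm]
    exact h1.symm
  have hdiag : ∀ i, 0 ≤ S i i := by
    intro i
    have := hS.dotProduct_mulVec_nonneg (fun l => if l = i then 1 else 0)
    simpa [mulVec, dotProduct] using this
  have hkey : ∑ i, ∑ j, S i j ^ 2 ≤ (∑ i, S i i) ^ 2 := by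
    calc ∑ i, ∑ j, S i j ^ 2 ≤ ∑ i, ∑ j, S i i * S j j :=
          Finset.sum_le_sum fun i _ => Finset.sum_le_sum fun j _ => psd_entry_sq_le hS i j
      _ = (∑ i, S i i) ^ 2 := by rw [sq, Finset.sum_mul_sum]
  have htrace : nuclearNorm A = ∑ i, S i i := by
    rfl
  rw [frobNorm, htrace, htr]
  calc Real.sqrt (∑ i, ∑ j, S i j ^ 2) ≤ Real.sqrt ((∑ i, S i i) ^ 2) :=
        Real.sqrt_le_sqrt hkey
    _ = ∑ i, S i i := Real.sqrt_sq (Finset.sum_nonneg fun i _ => hdiag i)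

lemma frobNorm_nonneg {m k : ℕ} (A : Matrix (Fin m) (Fin k) ℝ) : 0 ≤ frobNorm A :=
  Real.sqrt_nonneg _

lemma sgn_le_one (b : Bool) : sgn b ≤ 1 := by unfold sgn; split <;> norm_num
lemma sgn_sq (b : Bool) : sgn b ^ 2 = 1 := by unfold sgn; split <;> norm_num

set_option maxHeartbeats 2000000 in
theorem rademacher_FLR_bound (n d c : ℕ) (hn : 0 < n) (hd : 0 < d) (hc : 3 ≤ c)
    (Xt : Matrix (Fin n) (Fin d) ℝ) (Xs Zs El21 Ef1 : ℝ)
    (hXs : 0 ≤ Xs) (hZs : 0 ≤ Zs) (hEl21 : 0 ≤ El21) (hEf1 : 0 ≤ Ef1) :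
    ((1 : ℝ) / 2 ^ (n * c)) * ∑ σ : Fin n × Fin c → Bool,
        sSup {v : ℝ | ∃ (X : Matrix (Fin n) (Fin d) ℝ) (Z : Matrix (Fin d) (Fin c) ℝ)
          (El : Matrix (Fin n) (Fin c) ℝ),
            nuclearNorm X ≤ Xs ∧ nuclearNorm Z ≤ Zs ∧ l21Norm El ≤ El21 ∧
            l1Norm (Xt - X) ≤ Ef1 ∧
            (∀ i, ∃ j, ∀ k, (X * Z) i k = if k = j then (1 : ℝ) else 0) ∧
            v = ((1 : ℝ) / (n * c)) * ∑ i : Fin n, ∑ j : Fin c,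
              sgn (σ (i, j)) * ((X * Z) i j + El i j)} ≤
      El21 * Real.sqrt (3 * Real.log c / (n * c)) +
        min (Xs * Zs * Real.sqrt (Real.log (2 * ((max n c : ℕ) : ℝ)) / (n * c)))
          (min (Zs * (frobNorm Xt + Real.sqrt d * Ef1) / Real.sqrt (n * c))
            (Real.sqrt (2 / c))) := by
  have hnR : (0:ℝ) < n := by exact_mod_cast hn
  have hcR : (0:ℝ) < c := by positivity
  have hc3 : (3:ℝ) ≤ c := by exact_mod_cast hc
  have hn1 : (1:ℝ) ≤ n := by exact_mod_cast hn
  set RHS := El21 * Real.sqrt (3 * Real.log c / (n * c)) +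
        min (Xs * Zs * Real.sqrt (Real.log (2 * ((max n c : ℕ) : ℝ)) / (n * c)))
          (min (Zs * (frobNorm Xt + Real.sqrt d * Ef1) / Real.sqrt (n * c))
            (Real.sqrt (2 / c))) with hRHSdef
  have hRHS0 : 0 ≤ RHS := by
    apply add_nonneg (by positivity)
    refine le_min (by positivity) (le_min ?_ (by positivity))
    exact div_nonneg (mul_nonneg hZs (add_nonneg (frobNorm_nonneg _) (by positivity)))
      (Real.sqrt_nonneg _)
  -- first term comparison
  have hlog1 : (1:ℝ) ≤ Real.log c := by
    rw [Real.le_log_iff_exp_le hcR]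
    calc Real.exp 1 ≤ 2.7182818286 := Real.exp_one_lt_d9.le
      _ ≤ 3 := by norm_num
      _ ≤ c := hc3
  have hterm1 : Real.sqrt c / (n * c) ≤ Real.sqrt (3 * Real.log c / (n * c)) := by
    have h1 : Real.sqrt c / (n * c) = Real.sqrt (c / (n*c)^2) := by
      rw [Real.sqrt_div (le_of_lt hcR)]
      rw [Real.sqrt_sq (by positivity)]
    rw [h1]
    apply Real.sqrt_le_sqrt
    rw [div_le_div_iff₀ (by positivity) (by positivity)]
    calc (c:ℝ) * ((n:ℝ)*c) ≤ ((n:ℝ)*c) * ((n:ℝ)*c) :=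
          mul_le_mul_of_nonneg_right (le_mul_of_one_le_left hcR.le hn1)
            (by positivity)
      _ = ((n:ℝ)*c)^2 := by ring
      _ ≤ 3 * Real.log c * ((n:ℝ)*c)^2 :=
          le_mul_of_one_le_left (by positivity) (by linarith)
  -- key per-sigma bound
  have key : ∀ σ : Fin n × Fin c → Bool,
      sSup {v : ℝ | ∃ (X : Matrix (Fin n) (Fin d) ℝ) (Z : Matrix (Fin d) (Fin c) ℝ)
          (El : Matrix (Fin n) (Fin c) ℝ),
            nuclearNorm X ≤ Xs ∧ nuclearNorm Z ≤ Zs ∧ l21Norm El ≤ El21 ∧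
            l1Norm (Xt - X) ≤ Ef1 ∧
            (∀ i, ∃ j, ∀ k, (X * Z) i k = if k = j then (1 : ℝ) else 0) ∧
            v = ((1 : ℝ) / (n * c)) * ∑ i : Fin n, ∑ j : Fin c,
              sgn (σ (i, j)) * ((X * Z) i j + El i j)} ≤ RHS := by
    intro σ
    apply Real.sSup_le _ hRHS0
    rintro v ⟨X, Z, El, hX, hZ, hEl, hfeat, honehot, rfl⟩
    -- B part
    have hB : ∑ i : Fin n, ∑ j : Fin c, sgn (σ (i, j)) * (X * Z) i j ≤ n := by
      calc ∑ i : Fin n, ∑ j : Fin c, sgn (σ (i, j)) * (X * Z) i j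
          ≤ ∑ _i : Fin n, (1:ℝ) := by
            apply Finset.sum_le_sum
            intro i _
            obtain ⟨j₀, hj⟩ := honehot i
            have : ∑ j : Fin c, sgn (σ (i, j)) * (X * Z) i j = sgn (σ (i, j₀)) := by
              calc ∑ j : Fin c, sgn (σ (i, j)) * (X * Z) i j
                  = ∑ j : Fin c, (if j = j₀ then sgn (σ (i, j)) else 0) := by
                    apply Finset.sum_congr rfl
                    intro j _
                    rw [hj j]
                    split <;> simp
                _ = sgn (σ (i, j₀)) := by rw [Finset.sum_ite_eq' univ j₀ (fun j => sgn (σ (i, j)))]; simp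
            rw [this]; exact sgn_le_one _
        _ = n := by simp
    -- A part
    have hA : ∑ i : Fin n, ∑ j : Fin c, sgn (σ (i, j)) * El i j ≤ Real.sqrt c * El21 := by
      have hrow : ∀ i, ∑ j : Fin c, sgn (σ (i, j)) * El i j ≤
          Real.sqrt c * Real.sqrt (∑ j, El i j ^ 2) := by
        intro i
        have := Real.sum_mul_le_sqrt_mul_sqrt Finset.univ
          (fun j : Fin c => sgn (σ (i, j))) (fun j => El i j)
        simpa [sgn_sq] using this
      calc ∑ i : Fin n, ∑ j : Fin c, sgn (σ (i, j)) * El i j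
          ≤ ∑ i : Fin n, Real.sqrt c * Real.sqrt (∑ j, El i j ^ 2) :=
            Finset.sum_le_sum fun i _ => hrow i
        _ = Real.sqrt c * l21Norm El := by rw [← Finset.mul_sum]; rfl
        _ ≤ Real.sqrt c * El21 := by
            apply mul_le_mul_of_nonneg_left hEl (Real.sqrt_nonneg _)
    -- matrix norm facts
    have hfrobXZ : frobNorm (X * Z) = Real.sqrt n := by
      unfold frobNorm
      congr 1
      calc ∑ i : Fin n, ∑ j : Fin c, (X * Z) i j ^ 2 = ∑ _i : Fin n, (1:ℝ) := by
            apply Finset.sum_congr rfl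
            intro i _
            obtain ⟨j₀, hj⟩ := honehot i
            calc ∑ j : Fin c, (X * Z) i j ^ 2
                = ∑ j : Fin c, (if j = j₀ then (1:ℝ) else 0) := by
                  apply Finset.sum_congr rfl
                  intro j _
                  rw [hj j]
                  split <;> norm_num
              _ = 1 := by rw [Finset.sum_ite_eq' univ j₀ (fun _ => (1:ℝ))]; simp
        _ = n := by simp
    have hfact1 : Real.sqrt n ≤ Xs * Zs := by
      calc Real.sqrt n = frobNorm (X * Z) := hfrobXZ.symm
        _ ≤ frobNorm X * frobNorm Z := frobNorm_mul_le X Z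
        _ ≤ Xs * Zs := by
            apply mul_le_mul ((frobNorm_le_nuclearNorm X).trans hX)
              ((frobNorm_le_nuclearNorm Z).trans hZ) (frobNorm_nonneg Z)
              hXs
    have hXbound : frobNorm X ≤ frobNorm Xt + Real.sqrt d * Ef1 := by
      have hd1 : (1:ℝ) ≤ Real.sqrt d := by
        rw [show (1:ℝ) = Real.sqrt 1 by simp]
        apply Real.sqrt_le_sqrt
        exact_mod_cast hd
      have h1 : frobNorm X ≤ frobNorm Xt + frobNorm (Xt - X) := by
        have := frobNorm_sub_le (m := n) (k := d) Xt (Xt - X)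
        simpa using this
      calc frobNorm X ≤ frobNorm Xt + frobNorm (Xt - X) := h1
        _ ≤ frobNorm Xt + l1Norm (Xt - X) := by
            linarith [frobNorm_le_l1Norm (Xt - X)]
        _ ≤ frobNorm Xt + Ef1 := by linarith
        _ ≤ frobNorm Xt + Real.sqrt d * Ef1 := by nlinarith [hd1, hEf1]
    have hfact2 : Real.sqrt n ≤ Zs * (frobNorm Xt + Real.sqrt d * Ef1) := by
      calc Real.sqrt n = frobNorm (X * Z) := hfrobXZ.symm
        _ ≤ frobNorm X * frobNorm Z := frobNorm_mul_le X Z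
        _ ≤ (frobNorm Xt + Real.sqrt d * Ef1) * Zs := by
            apply mul_le_mul hXbound ((frobNorm_le_nuclearNorm Z).trans hZ)
              (frobNorm_nonneg Z) (le_trans (frobNorm_nonneg X) hXbound)
        _ = Zs * (frobNorm Xt + Real.sqrt d * Ef1) := mul_comm _ _
    -- 1/c ≤ min(...)
    have hinvc_sqrt : (1:ℝ)/c ≤ Real.sqrt (1/c) := by
      rw [show Real.sqrt (1/(c:ℝ)) = Real.sqrt 1 / Real.sqrt c by
        rw [Real.sqrt_div (by norm_num)]]
      rw [Real.sqrt_one]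
      rw [div_le_div_iff₀ hcR (Real.sqrt_pos.mpr hcR)]
      nlinarith [Real.sq_sqrt (le_of_lt hcR), Real.sqrt_nonneg (c:ℝ), hc3,
        Real.sqrt_pos.mpr hcR]
    have hmin1 : (1:ℝ)/c ≤ Xs * Zs * Real.sqrt (Real.log (2 * ((max n c : ℕ) : ℝ)) / (n * c)) := by
      have hL : (1:ℝ) ≤ Real.log (2 * ((max n c : ℕ) : ℝ)) := by
        rw [Real.le_log_iff_exp_le (by positivity)]
        have hmax : (c:ℝ) ≤ ((max n c : ℕ) : ℝ) := by exact_mod_cast Nat.le_max_right n c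
        calc Real.exp 1 ≤ 2.7182818286 := Real.exp_one_lt_d9.le
          _ ≤ 2 * 3 := by norm_num
          _ ≤ 2 * ((max n c : ℕ) : ℝ) := by nlinarith [hc3.trans hmax]
      calc (1:ℝ)/c ≤ Real.sqrt (1/c) := hinvc_sqrt
        _ ≤ Real.sqrt ((n:ℝ) * (Real.log (2 * ((max n c : ℕ) : ℝ)) / (n * c))) := by
            apply Real.sqrt_le_sqrt
            rw [show (n:ℝ) * (Real.log (2 * ((max n c : ℕ) : ℝ)) / (n * c)) =
                Real.log (2 * ((max n c : ℕ) : ℝ)) / c by field_simp]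
            gcongr
        _ = Real.sqrt n * Real.sqrt (Real.log (2 * ((max n c : ℕ) : ℝ)) / (n * c)) :=
            Real.sqrt_mul (by positivity) _
        _ ≤ Xs * Zs * Real.sqrt (Real.log (2 * ((max n c : ℕ) : ℝ)) / (n * c)) := by
            apply mul_le_mul_of_nonneg_right hfact1 (Real.sqrt_nonneg _)
    have hmin2 : (1:ℝ)/c ≤ Zs * (frobNorm Xt + Real.sqrt d * Ef1) / Real.sqrt (n * c) := by
      calc (1:ℝ)/c ≤ Real.sqrt (1/c) := hinvc_sqrt
        _ = Real.sqrt n / Real.sqrt (n * c) := by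
            rw [← Real.sqrt_div (by positivity : (0:ℝ) ≤ (n:ℝ))]
            congr 1
            field_simp
        _ ≤ Zs * (frobNorm Xt + Real.sqrt d * Ef1) / Real.sqrt (n * c) :=
            (div_le_div_iff_of_pos_right (Real.sqrt_pos.mpr (by positivity))).mpr hfact2
    have hmin3 : (1:ℝ)/c ≤ Real.sqrt (2/c) := by
      calc (1:ℝ)/c ≤ Real.sqrt (1/c) := hinvc_sqrt
        _ ≤ Real.sqrt (2/c) := by
            apply Real.sqrt_le_sqrt
            gcongr
            norm_num
    -- combine
    have hsplit : ∑ i : Fin n, ∑ j : Fin c, sgn (σ (i,j)) * ((X*Z) i j + El i j)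
        = (∑ i : Fin n, ∑ j : Fin c, sgn (σ (i,j)) * (X*Z) i j)
          + ∑ i : Fin n, ∑ j : Fin c, sgn (σ (i,j)) * El i j := by
      simp_rw [mul_add, Finset.sum_add_distrib]
    rw [hsplit]
    have hv : (1:ℝ)/((n:ℝ)*c) * ((n:ℝ) + Real.sqrt c * El21)
        = 1/c + El21 * (Real.sqrt c/((n:ℝ)*c)) := by
      field_simp
    calc (1:ℝ)/((n:ℝ)*c) * ((∑ i : Fin n, ∑ j : Fin c, sgn (σ (i,j)) * (X*Z) i j)
          + ∑ i : Fin n, ∑ j : Fin c, sgn (σ (i,j)) * El i j)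
        ≤ (1:ℝ)/((n:ℝ)*c) * ((n:ℝ) + Real.sqrt c * El21) :=
          mul_le_mul_of_nonneg_left (add_le_add hB hA) (by positivity)
      _ = 1/c + El21 * (Real.sqrt c/((n:ℝ)*c)) := hv
      _ ≤ min (Xs * Zs * Real.sqrt (Real.log (2 * ((max n c : ℕ) : ℝ)) / (n * c)))
            (min (Zs * (frobNorm Xt + Real.sqrt d * Ef1) / Real.sqrt (n * c))
              (Real.sqrt (2 / c)))
          + El21 * Real.sqrt (3 * Real.log c / (n * c)) :=
          add_le_add (le_min hmin1 (le_min hmin2 hmin3))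
            (mul_le_mul_of_nonneg_left hterm1 hEl21)
      _ = RHS := by rw [hRHSdef]; ring
  have hcard : Fintype.card (Fin n × Fin c → Bool) = 2 ^ (n * c) := by
    simp [Fintype.card_fun]
  calc ((1 : ℝ) / 2 ^ (n * c)) * ∑ σ : Fin n × Fin c → Bool,
        sSup {v : ℝ | ∃ (X : Matrix (Fin n) (Fin d) ℝ) (Z : Matrix (Fin d) (Fin c) ℝ)
          (El : Matrix (Fin n) (Fin c) ℝ),
            nuclearNorm X ≤ Xs ∧ nuclearNorm Z ≤ Zs ∧ l21Norm El ≤ El21 ∧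
            l1Norm (Xt - X) ≤ Ef1 ∧
            (∀ i, ∃ j, ∀ k, (X * Z) i k = if k = j then (1 : ℝ) else 0) ∧
            v = ((1 : ℝ) / (n * c)) * ∑ i : Fin n, ∑ j : Fin c,
              sgn (σ (i, j)) * ((X * Z) i j + El i j)}
      ≤ ((1 : ℝ) / 2 ^ (n * c)) * ∑ _σ : Fin n × Fin c → Bool, RHS :=
        mul_le_mul_of_nonneg_left (Finset.sum_le_sum fun σ _ => key σ) (by positivity)
    _ = RHS := by
        rw [Finset.sum_const, Finset.card_univ, hcard, nsmul_eq_mul]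
        push_cast
        rw [← mul_assoc, one_div, inv_mul_cancel₀ (by positivity), one_mul]
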